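/- Let G be a finite group and ρ a representation of G on a nonzero finite-dimensional complex vector space W, with character χ(g) = tr(ρ(g)). If h ∈ G and λ ∈ ℂ satisfy χ(γh) = λ·χ(γ) for every γ ∈ G, then λ is a root of unity (λ^n = 1 for some n ≥ 1) and ρ(h) = λ · id_W. -/

import Mathlib

/-- For a representation `ρ` of a finite group `G` on a nonzero finite-dimensional
complex vector space `W` with character `χ g = tr (ρ g)`: if `h ∈ G` and `λ ∈ ℂ`
satisfy `χ (γ h) = λ · χ γ` for all `γ ∈ G`, then `λ` is a root of unity and
`ρ h = λ · id`. -/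
theorem scalar_of_character_proportional
    {G : Type*} [Group G] [Fintype G]
    {W : Type*} [AddCommGroup W] [Module ℂ W] [FiniteDimensional ℂ W] [Nontrivial W]
    (ρ : Representation ℂ G W) (h : G) (l : ℂ)
    (hχ : ∀ γ : G, LinearMap.trace ℂ W (ρ (γ * h)) = l * LinearMap.trace ℂ W (ρ γ)) :
    (∃ n : ℕ, 1 ≤ n ∧ l ^ n = 1) ∧ ρ h = l • (1 : W →ₗ[ℂ] W) := by
  classical
  set m : ℂ := (Module.finrank ℂ W : ℂ) with hm
  have hm0 : m ≠ 0 := by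
    have := Module.finrank_pos (R := ℂ) (M := W)
    exact_mod_cast Nat.cast_ne_zero.mpr this.ne'
  -- Step 1: χ(h^i) = l^i * m
  have key : ∀ i : ℕ, LinearMap.trace ℂ W (ρ (h ^ i)) = l ^ i * m := by
    intro i
    induction i with
    | zero => simp [hm]
    | succ i ih =>
        have : h ^ (i + 1) = h ^ i * h := pow_succ h i
        rw [this, hχ (h ^ i), ih, pow_succ]
        ring
  -- Step 2: l ^ d = 1 for d = orderOf h
  set d : ℕ := orderOf h with hd
  have hd1 : 1 ≤ d := orderOf_pos h
  have hpd : h ^ d = 1 := pow_orderOf_eq_one h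
  have hld : l ^ d = 1 := by
    have := key d
    rw [hpd, map_one] at this
    have htr1 : LinearMap.trace ℂ W (1 : W →ₗ[ℂ] W) = m := by
      simpa [hm] using LinearMap.trace_one (R := ℂ) (M := W)
    rw [htr1] at this
    field_simp at this
    exact this.symm
  have hl0 : l ≠ 0 := by
    intro h0
    rw [h0, zero_pow (by omega : d ≠ 0)] at hld
    exact zero_ne_one hld
  -- Step 3: B := l⁻¹ • ρ h satisfies B ^ d = 1 and tr B^i = m
  set B : Module.End ℂ W := l⁻¹ • (ρ h : W →ₗ[ℂ] W) with hB
  have hBpow : ∀ i : ℕ, B ^ i = (l⁻¹) ^ i • ((ρ h : W →ₗ[ℂ] W) ^ i) := by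
    intro i; rw [hB, smul_pow]
  have hrpow : ∀ i : ℕ, ((ρ h : W →ₗ[ℂ] W) ^ i) = ρ (h ^ i) := by
    intro i; rw [map_pow]
  have hBd : B ^ d = 1 := by
    rw [hBpow, hrpow, hpd, map_one, inv_pow, hld, inv_one, one_smul]
  have htrB : ∀ i : ℕ, LinearMap.trace ℂ W (B ^ i) = m := by
    intro i
    rw [hBpow, hrpow, map_smul, key, smul_eq_mul, inv_pow]
    field_simp
  -- P := (1/d) ∑ B^i
  set P : Module.End ℂ W := (d : ℂ)⁻¹ • ∑ i ∈ Finset.range d, B ^ i with hP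
  have hdc0 : (d : ℂ) ≠ 0 := Nat.cast_ne_zero.mpr (by omega)
  have hsumshift : ∑ i ∈ Finset.range d, B ^ (i + 1) = ∑ i ∈ Finset.range d, B ^ i := by
    have h1 := Finset.sum_range_succ (fun i => B ^ i) d
    have h2 := Finset.sum_range_succ' (fun i => B ^ i) d
    simp only [pow_zero, hBd] at h1 h2
    have := h1.symm.trans h2
    exact (add_right_cancel this).symm
  have hBP : B * P = P := by
    rw [hP, mul_smul_comm, Finset.mul_sum]
    congr 1
    calc ∑ i ∈ Finset.range d, B * B ^ i
        = ∑ i ∈ Finset.range d, B ^ (i + 1) := by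
          refine Finset.sum_congr rfl fun i _ => ?_
          rw [pow_succ']
      _ = ∑ i ∈ Finset.range d, B ^ i := hsumshift
  have hBiP : ∀ i : ℕ, B ^ i * P = P := by
    intro i
    induction i with
    | zero => rw [pow_zero, one_mul]
    | succ i ih => rw [pow_succ', mul_assoc, ih, hBP]
  have hPP : P * P = P := by
    conv_lhs => rw [hP]
    rw [smul_mul_assoc, Finset.sum_mul]
    have : ∑ i ∈ Finset.range d, B ^ i * P = (d : ℕ) • P := by
      rw [Finset.sum_congr rfl fun i _ => hBiP i, Finset.sum_const, Finset.card_range]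
    rw [this, ← Nat.cast_smul_eq_nsmul ℂ, smul_smul, inv_mul_cancel₀ hdc0, one_smul]
  have htrP : LinearMap.trace ℂ W P = m := by
    rw [hP, map_smul, map_sum, smul_eq_mul]
    rw [Finset.sum_congr rfl fun i _ => htrB i, Finset.sum_const, Finset.card_range,
      nsmul_eq_mul]
    field_simp
  -- P is a projection with full-rank range, hence P = 1
  obtain ⟨p, hp⟩ := (LinearMap.isProj_iff_isIdempotentElem P).mpr (by
    exact hPP)
  have htrP' : LinearMap.trace ℂ W P = (Module.finrank ℂ p : ℂ) := hp.trace
  have hfr : Module.finrank ℂ p = Module.finrank ℂ W := by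
    have : (Module.finrank ℂ p : ℂ) = (Module.finrank ℂ W : ℂ) := by
      rw [← htrP', htrP, hm]
    exact_mod_cast this
  have hptop : p = ⊤ := Submodule.eq_top_of_finrank_eq hfr
  have hP1 : P = 1 := by
    ext x
    have hx : P x ∈ p := hp.map_mem x
    have := hp.map_id x (by rw [hptop]; trivial)
    simpa using this
  have hB1 : B = 1 := by
    calc B = B * P := by rw [hP1, mul_one]
    _ = P := hBP
    _ = 1 := hP1
  constructor
  · exact ⟨d, hd1, hld⟩
  · have : l • B = l • (1 : W →ₗ[ℂ] W) := by rw [hB1]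
    rw [hB, smul_smul, mul_inv_cancel₀ hl0, one_smul] at this
    exact this
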